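/- In the triangulation D*_{r,t}, the distance between the poles n and s equals 2r, and every vertex v satisfies dist(n, v) + dist(s, v) = 2r. -/

import Mathlib

/-- The 6-regular triangular lattice: `(x,y)` is adjacent to
`(x±1,y)`, `(x,y±1)`, `(x+1,y+1)` and `(x−1,y−1)`. -/
def triLattice : SimpleGraph (ℤ × ℤ) :=
  SimpleGraph.fromRel fun a b =>
    (b.1 - a.1, b.2 - a.2) ∈ ({(1, 0), (0, 1), (1, 1)} : Set (ℤ × ℤ))

/-- The ball of radius `r` around the origin of the triangular lattice. -/
def ball (r : ℕ) : Set (ℤ × ℤ) := {v | triLattice.dist (0, 0) v ≤ r}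

/-- The sphere of radius `r` around the origin (boundary of the ball). -/
def sphere (r : ℕ) : Set (ℤ × ℤ) := {v | triLattice.dist (0, 0) v = r}

/-- Vertices of one copy of the ball of radius `r`. -/
abbrev BallV (r : ℕ) := {v : ℤ × ℤ // v ∈ ball r}

/-- The gluing relation: the boundary vertex `a` of the first (northern) copy
of the ball is identified with the boundary vertex `e a` of the second
(southern) copy; `e` encodes the offset-`t` rotation of the boundary cycle. -/
def glueRel (r : ℕ) (e : ℤ × ℤ → ℤ × ℤ) :
    (BallV r ⊕ BallV r) → (BallV r ⊕ BallV r) → Prop := fun x y =>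
  ∃ a b : BallV r, (a : ℤ × ℤ) ∈ sphere r ∧ (b : ℤ × ℤ) = e a ∧
    x = Sum.inl a ∧ y = Sum.inr b

/-- The vertex set of `D*_{r,t}`: two disjoint copies of the radius-`r` ball
glued along their boundary via `e`. -/
def GluedV (r : ℕ) (e : ℤ × ℤ → ℤ × ℤ) := Quot (glueRel r e)

/-- The triangulation `D*_{r,t}`: edges come from the edges of the two copies
of the ball. -/
def Dstar (r : ℕ) (e : ℤ × ℤ → ℤ × ℤ) : SimpleGraph (GluedV r e) :=
  SimpleGraph.fromRel fun x y => ∃ a b : BallV r,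
    triLattice.Adj a.1 b.1 ∧
      ((x = Quot.mk _ (Sum.inl a) ∧ y = Quot.mk _ (Sum.inl b)) ∨
       (x = Quot.mk _ (Sum.inr a) ∧ y = Quot.mk _ (Sum.inr b)))

/-- The north pole: the centre of the first copy of the ball. -/
def npole (r : ℕ) (e : ℤ × ℤ → ℤ × ℤ) : GluedV r e :=
  Quot.mk _ (Sum.inl ⟨(0, 0), by simp [ball, SimpleGraph.dist_self]⟩)

/-- The south pole: the centre of the second copy of the ball. -/
def spole (r : ℕ) (e : ℤ × ℤ → ℤ × ℤ) : GluedV r e :=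
  Quot.mk _ (Sum.inr ⟨(0, 0), by simp [ball, SimpleGraph.dist_self]⟩)

/-- `e` preserves adjacency along the boundary cycle (as the rotation by `t`
does). -/
def SphereAdjPreserving (r : ℕ) (e : ℤ × ℤ → ℤ × ℤ) : Prop :=
  ∀ a ∈ sphere r, ∀ b ∈ sphere r, (triLattice.Adj a b ↔ triLattice.Adj (e a) (e b))

/-- A corner of the ball: a boundary vertex with only 3 neighbours in the
ball. -/
def Corner (r : ℕ) (v : ℤ × ℤ) : Prop :=
  v ∈ sphere r ∧ (triLattice.neighborSet v ∩ ball r).ncard = 3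

def hex (v : ℤ × ℤ) : ℕ := (v.1.natAbs + v.2.natAbs + (v.1 - v.2).natAbs) / 2

lemma hex_eq_zero {v : ℤ × ℤ} (h : hex v = 0) : v = (0, 0) := by
  obtain ⟨x, y⟩ := v
  simp only [hex] at h
  have : x = 0 ∧ y = 0 := by omega
  simp [this.1, this.2]

lemma adj_of_delta {u v : ℤ × ℤ}
    (h : (v.1 - u.1 = 1 ∧ v.2 - u.2 = 0) ∨ (v.1 - u.1 = 0 ∧ v.2 - u.2 = 1) ∨
         (v.1 - u.1 = 1 ∧ v.2 - u.2 = 1) ∨ (u.1 - v.1 = 1 ∧ u.2 - v.2 = 0) ∨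
         (u.1 - v.1 = 0 ∧ u.2 - v.2 = 1) ∨ (u.1 - v.1 = 1 ∧ u.2 - v.2 = 1)) :
    triLattice.Adj u v := by
  rw [triLattice, SimpleGraph.fromRel_adj]
  simp only [Set.mem_insert_iff, Set.mem_singleton_iff, Prod.mk.injEq, ne_eq, Prod.ext_iff, not_and]
  omega

lemma hex_adj {u v : ℤ × ℤ} (h : triLattice.Adj u v) :
    hex v ≤ hex u + 1 ∧ hex u ≤ hex v + 1 := by
  rw [triLattice, SimpleGraph.fromRel_adj] at h
  obtain ⟨-, h⟩ := h
  simp only [Set.mem_insert_iff, Set.mem_singleton_iff, Prod.mk.injEq] at h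
  obtain ⟨x, y⟩ := u; obtain ⟨a, b⟩ := v
  simp only [hex] at *
  omega

lemma exists_down {v : ℤ × ℤ} (h : v ≠ (0, 0)) :
    ∃ w, triLattice.Adj w v ∧ hex w + 1 = hex v := by
  obtain ⟨x, y⟩ := v
  have h' : ¬(x = 0 ∧ y = 0) := by rintro ⟨rfl, rfl⟩; exact h rfl
  by_cases h1 : 0 < x ∧ 0 < y
  · exact ⟨(x - 1, y - 1), adj_of_delta (by omega), by simp only [hex]; omega⟩
  by_cases h2 : x < 0 ∧ y < 0
  · exact ⟨(x + 1, y + 1), adj_of_delta (by omega), by simp only [hex]; omega⟩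
  by_cases h3 : 0 < x
  · exact ⟨(x - 1, y), adj_of_delta (by omega), by simp only [hex]; omega⟩
  by_cases h4 : x < 0
  · exact ⟨(x + 1, y), adj_of_delta (by omega), by simp only [hex]; omega⟩
  by_cases h5 : 0 < y
  · exact ⟨(x, y - 1), adj_of_delta (by omega), by simp only [hex]; omega⟩
  · exact ⟨(x, y + 1), adj_of_delta (by omega), by simp only [hex]; omega⟩

lemma exists_up (v : ℤ × ℤ) :
    ∃ w, triLattice.Adj w v ∧ hex w = hex v + 1 := by
  obtain ⟨x, y⟩ := v
  by_cases h1 : 0 ≤ x ∧ 0 ≤ y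
  · exact ⟨(x + 1, y + 1), adj_of_delta (by omega), by simp only [hex]; omega⟩
  by_cases h2 : x ≤ 0 ∧ y ≤ 0
  · exact ⟨(x - 1, y - 1), adj_of_delta (by omega), by simp only [hex]; omega⟩
  by_cases h3 : 0 < x
  · exact ⟨(x + 1, y), adj_of_delta (by omega), by simp only [hex]; omega⟩
  · exact ⟨(x - 1, y), adj_of_delta (by omega), by simp only [hex]; omega⟩

lemma walk_to (v : ℤ × ℤ) : ∃ p : triLattice.Walk (0, 0) v, p.length = hex v := by
  generalize hk : hex v = k
  induction k generalizing v with
  | zero =>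
    obtain rfl := hex_eq_zero hk
    exact ⟨.nil, rfl⟩
  | succ n ih =>
    have hne : v ≠ (0, 0) := by rintro rfl; simp [hex] at hk
    obtain ⟨w, hadj, hh⟩ := exists_down hne
    obtain ⟨p, hp⟩ := ih w (by omega)
    exact ⟨p.concat hadj, (SimpleGraph.Walk.length_concat _ _).trans (congrArg (· + 1) hp)⟩

lemma hex_le_walk {u v : ℤ × ℤ} (p : triLattice.Walk u v) : hex v ≤ hex u + p.length := by
  induction p with
  | nil => simp
  | cons h p ih =>
    have := (hex_adj h).1
    simp only [SimpleGraph.Walk.length_cons]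
    omega

lemma hex_eq_dist (v : ℤ × ℤ) : triLattice.dist (0, 0) v = hex v := by
  obtain ⟨p, hp⟩ := walk_to v
  refine le_antisymm (hp ▸ SimpleGraph.dist_le p) ?_
  obtain ⟨q, hq⟩ := SimpleGraph.Reachable.exists_walk_length_eq_dist ⟨p⟩
  have := hex_le_walk q
  simp only [hq] at this
  simpa [hex] using this

lemma mem_ball_iff {r : ℕ} {v : ℤ × ℤ} : v ∈ ball r ↔ hex v ≤ r := by
  rw [ball, Set.mem_setOf_eq, hex_eq_dist]

lemma mem_sphere_iff {r : ℕ} {v : ℤ × ℤ} : v ∈ sphere r ↔ hex v = r := by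
  rw [sphere, Set.mem_setOf_eq, hex_eq_dist]

section Glued
variable (r : ℕ) (e : ℤ × ℤ → ℤ × ℤ)

open Classical in
noncomputable def disc : GluedV r e → (ℤ × ℤ) ⊕ (ℤ × ℤ) :=
  Quot.lift
    (fun x => match x with
      | .inl a => if (a : ℤ × ℤ) ∈ sphere r then .inr (e a) else .inl a
      | .inr b => .inr b)
    (by rintro x y ⟨a, b, ha, hb, rfl, rfl⟩; simp [ha, hb])

variable {r e}

lemma inl_inj (hinj : Set.InjOn e (sphere r)) {a b : BallV r}
    (h : Quot.mk (glueRel r e) (Sum.inl a) = Quot.mk (glueRel r e) (Sum.inl b)) : a = b := by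
  have h2 := congrArg (disc r e) h
  simp only [disc] at h2
  by_cases ha : (a : ℤ × ℤ) ∈ sphere r <;> by_cases hb : (b : ℤ × ℤ) ∈ sphere r <;>
    simp [ha, hb] at h2
  · exact Subtype.ext (hinj ha hb h2)
  · exact Subtype.ext h2

lemma inr_inj {a b : BallV r}
    (h : Quot.mk (glueRel r e) (Sum.inr a) = Quot.mk (glueRel r e) (Sum.inr b)) : a = b := by
  have h2 := congrArg (disc r e) h
  simp only [disc] at h2
  exact Subtype.ext (by simpa using h2)

lemma adjL (hinj : Set.InjOn e (sphere r)) {a b : BallV r} (h : triLattice.Adj a.1 b.1) :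
    (Dstar r e).Adj (Quot.mk _ (Sum.inl a)) (Quot.mk _ (Sum.inl b)) := by
  refine (SimpleGraph.fromRel_adj _ _ _).mpr ?_
  exact ⟨fun hc => h.ne (congrArg Subtype.val (inl_inj hinj hc)),
    Or.inl ⟨a, b, h, Or.inl ⟨rfl, rfl⟩⟩⟩

lemma adjR {a b : BallV r} (h : triLattice.Adj a.1 b.1) :
    (Dstar r e).Adj (Quot.mk _ (Sum.inr a)) (Quot.mk _ (Sum.inr b)) := by
  refine (SimpleGraph.fromRel_adj _ _ _).mpr ?_
  exact ⟨fun hc => h.ne (congrArg Subtype.val (inr_inj hc)),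
    Or.inl ⟨a, b, h, Or.inr ⟨rfl, rfl⟩⟩⟩

variable (r e) in
noncomputable def latF (hm : Set.MapsTo e (sphere r) (sphere r)) : GluedV r e → ℕ :=
  Quot.lift (Sum.elim (fun a => hex a.1) (fun b => 2 * r - hex b.1))
    (by
      rintro x y ⟨a, b, ha, hb, rfl, rfl⟩
      simp only [Sum.elim_inl, Sum.elim_inr]
      have h1 : hex a.1 = r := mem_sphere_iff.mp ha
      have h2 : hex b.1 = r := by rw [hb]; exact mem_sphere_iff.mp (hm ha)
      omega)

variable {hm : Set.MapsTo e (sphere r) (sphere r)}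

lemma latF_inl (a : BallV r) : latF r e hm (Quot.mk _ (Sum.inl a)) = hex a.1 := rfl
lemma latF_inr (b : BallV r) : latF r e hm (Quot.mk _ (Sum.inr b)) = 2 * r - hex b.1 := rfl

lemma latF_adj {x y : GluedV r e} (h : (Dstar r e).Adj x y) :
    latF r e hm x ≤ latF r e hm y + 1 ∧ latF r e hm y ≤ latF r e hm x + 1 := by
  rw [Dstar, SimpleGraph.fromRel_adj] at h
  obtain ⟨-, h | h⟩ := h <;>
    obtain ⟨a, b, hab, ⟨rfl, rfl⟩ | ⟨rfl, rfl⟩⟩ := h <;>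
  · have h1 := hex_adj hab
    have h2 := mem_ball_iff.mp a.2
    have h3 := mem_ball_iff.mp b.2
    simp only [latF_inl, latF_inr]
    omega

lemma latF_walk {x y : GluedV r e} (p : (Dstar r e).Walk x y) :
    latF r e hm x ≤ latF r e hm y + p.length := by
  induction p with
  | nil => simp
  | cons h p ih =>
    have := (latF_adj (hm := hm) h).1
    simp only [SimpleGraph.Walk.length_cons]
    omega

lemma npole_walk (hinj : Set.InjOn e (sphere r)) (a : BallV r) :
    ∃ p : (Dstar r e).Walk (npole r e) (Quot.mk _ (Sum.inl a)), p.length = hex a.1 := by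
  generalize hk : hex a.1 = k
  induction k generalizing a with
  | zero =>
    have h0 : a.1 = (0, 0) := hex_eq_zero hk
    have heq : Quot.mk (glueRel r e) (Sum.inl a) = npole r e := by
      unfold npole
      exact congrArg _ (congrArg _ (Subtype.ext h0))
    rw [heq]
    exact ⟨.nil, rfl⟩
  | succ n ih =>
    have hne : a.1 ≠ (0, 0) := by
      intro hc
      rw [hc] at hk; simp [hex] at hk
    obtain ⟨w, hadj, hh⟩ := exists_down hne
    have hwb : w ∈ ball r := mem_ball_iff.mpr (by have := mem_ball_iff.mp a.2; omega)
    obtain ⟨p, hp⟩ := ih ⟨w, hwb⟩ (show hex w = n from by omega)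
    exact ⟨p.concat (adjL hinj hadj), (SimpleGraph.Walk.length_concat _ _).trans (congrArg (· + 1) hp)⟩

lemma spole_walk (b : BallV r) :
    ∃ p : (Dstar r e).Walk (spole r e) (Quot.mk _ (Sum.inr b)), p.length = hex b.1 := by
  generalize hk : hex b.1 = k
  induction k generalizing b with
  | zero =>
    have h0 : b.1 = (0, 0) := hex_eq_zero hk
    have heq : Quot.mk (glueRel r e) (Sum.inr b) = spole r e := by
      unfold spole
      exact congrArg _ (congrArg _ (Subtype.ext h0))
    rw [heq]
    exact ⟨.nil, rfl⟩
  | succ n ih =>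
    have hne : b.1 ≠ (0, 0) := by
      intro hc
      rw [hc] at hk; simp [hex] at hk
    obtain ⟨w, hadj, hh⟩ := exists_down hne
    have hwb : w ∈ ball r := mem_ball_iff.mpr (by have := mem_ball_iff.mp b.2; omega)
    obtain ⟨p, hp⟩ := ih ⟨w, hwb⟩ (show hex w = n from by omega)
    exact ⟨p.concat (adjR hadj), (SimpleGraph.Walk.length_concat _ _).trans (congrArg (· + 1) hp)⟩

lemma up_walk_inl (hinj : Set.InjOn e (sphere r)) :
    ∀ (k : ℕ) (a : BallV r), hex a.1 + k = r →
    ∃ c : BallV r, hex c.1 = r ∧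
      ∃ p : (Dstar r e).Walk (Quot.mk _ (Sum.inl c)) (Quot.mk _ (Sum.inl a)), p.length = k := by
  intro k
  induction k with
  | zero => exact fun a ha => ⟨a, by omega, .nil, rfl⟩
  | succ n ih =>
    intro a ha
    obtain ⟨w, hadj, hh⟩ := exists_up a.1
    have hwb : w ∈ ball r := mem_ball_iff.mpr (by omega)
    obtain ⟨c, hc, p, hp⟩ := ih ⟨w, hwb⟩ (by simpa using by omega)
    exact ⟨c, hc, p.concat (adjL hinj hadj), (SimpleGraph.Walk.length_concat _ _).trans (congrArg (· + 1) hp)⟩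

lemma up_walk_inr :
    ∀ (k : ℕ) (b : BallV r), hex b.1 + k = r →
    ∃ c : BallV r, hex c.1 = r ∧
      ∃ p : (Dstar r e).Walk (Quot.mk _ (Sum.inr c)) (Quot.mk _ (Sum.inr b)), p.length = k := by
  intro k
  induction k with
  | zero => exact fun b hb => ⟨b, by omega, .nil, rfl⟩
  | succ n ih =>
    intro b hb
    obtain ⟨w, hadj, hh⟩ := exists_up b.1
    have hwb : w ∈ ball r := mem_ball_iff.mpr (by omega)
    obtain ⟨c, hc, p, hp⟩ := ih ⟨w, hwb⟩ (by simpa using by omega)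
    exact ⟨c, hc, p.concat (adjR hadj), (SimpleGraph.Walk.length_concat _ _).trans (congrArg (· + 1) hp)⟩

end Glued

/-- In the triangulation `D*_{r,t}`, the distance between the poles `n` and
`s` is `2r`, and every vertex `v` satisfies
`dist(n,v) + dist(s,v) = 2r`. -/
theorem stmt_16 (r : ℕ) (hr : 2 ≤ r) (e : ℤ × ℤ → ℤ × ℤ)
    (he : Set.BijOn e (sphere r) (sphere r))
    (hadj : SphereAdjPreserving r e)
    (hcor : ∀ v ∈ sphere r, Corner r v → ¬ Corner r (e v)) :
    (Dstar r e).dist (npole r e) (spole r e) = 2 * r ∧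
    ∀ v : GluedV r e,
      (Dstar r e).dist (npole r e) v + (Dstar r e).dist (spole r e) v = 2 * r := by
  have hinj := he.2.1
  have hm := he.1
  have hFb : ∀ v : GluedV r e, latF r e hm v ≤ 2 * r := by
    intro v
    induction v using Quot.ind with | _ x => ?_
    rcases x with a | b
    · have := mem_ball_iff.mp a.2; rw [latF_inl]; omega
    · rw [latF_inr]; omega
  have hFs : latF r e hm (spole r e) = 2 * r := by
    show 2 * r - hex (0, 0) = 2 * r
    simp [hex]
  have walkN : ∀ v : GluedV r e,
      ∃ p : (Dstar r e).Walk (npole r e) v, p.length ≤ latF r e hm v := by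
    intro v
    induction v using Quot.ind with | _ x => ?_
    rcases x with a | b
    · obtain ⟨p, hp⟩ := npole_walk hinj a
      exact ⟨p, le_of_eq hp⟩
    · have hb := mem_ball_iff.mp b.2
      obtain ⟨c, hc, p, hp⟩ := up_walk_inr (r - hex b.1) b (by omega)
      obtain ⟨d, hd, hde⟩ := he.2.2 (mem_sphere_iff.mpr hc)
      have hdb : d ∈ ball r := by
        rw [mem_ball_iff]
        have := mem_sphere_iff.mp hd
        omega
      have heq : Quot.mk (glueRel r e) (Sum.inl ⟨d, hdb⟩) = Quot.mk _ (Sum.inr c) :=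
        Quot.sound ⟨⟨d, hdb⟩, c, hd, hde.symm, rfl, rfl⟩
      obtain ⟨q, hq⟩ := npole_walk hinj ⟨d, hdb⟩
      refine ⟨(q.copy rfl heq).append p, ?_⟩
      have hhd : hex d = r := mem_sphere_iff.mp hd
      rw [latF_inr]
      have h1 := SimpleGraph.Walk.length_append (q.copy rfl heq) p
      have h2 := SimpleGraph.Walk.length_copy q rfl heq
      refine le_trans (le_of_eq (show _ = hex (⟨d, hdb⟩ : BallV r).1 + (r - hex b.1) by omega)) ?_
      show hex (⟨d, hdb⟩ : BallV r).1 + (r - hex b.1) ≤ 2 * r - hex b.1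
      show hex d + (r - hex b.1) ≤ 2 * r - hex b.1
      omega
  have walkS : ∀ v : GluedV r e,
      ∃ p : (Dstar r e).Walk (spole r e) v, p.length ≤ 2 * r - latF r e hm v := by
    intro v
    induction v using Quot.ind with | _ x => ?_
    rcases x with a | b
    · have ha := mem_ball_iff.mp a.2
      obtain ⟨c, hc, p, hp⟩ := up_walk_inl hinj (r - hex a.1) a (by omega)
      have hcs : (c : ℤ × ℤ) ∈ sphere r := mem_sphere_iff.mpr hc
      have hecb : e c.1 ∈ ball r := by
        rw [mem_ball_iff]
        have := mem_sphere_iff.mp (hm hcs)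
        omega
      have heq : Quot.mk (glueRel r e) (Sum.inl c) = Quot.mk _ (Sum.inr ⟨e c.1, hecb⟩) :=
        Quot.sound ⟨c, ⟨e c.1, hecb⟩, hcs, rfl, rfl, rfl⟩
      obtain ⟨q, hq⟩ := spole_walk (⟨e c.1, hecb⟩ : BallV r)
      refine ⟨(q.copy rfl heq.symm).append p, ?_⟩
      rw [latF_inl]
      have h1 := SimpleGraph.Walk.length_append (q.copy rfl heq.symm) p
      have h2 := SimpleGraph.Walk.length_copy q rfl heq.symm
      refine le_trans (le_of_eq (show _ = hex (⟨e c.1, hecb⟩ : BallV r).1 + (r - hex a.1) by omega)) ?_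
      have hhd : hex (e c.1) = r := mem_sphere_iff.mp (hm hcs)
      show hex (⟨e c.1, hecb⟩ : BallV r).1 + (r - hex a.1) ≤ 2 * r - hex a.1
      show hex (e c.1) + (r - hex a.1) ≤ 2 * r - hex a.1
      omega
    · obtain ⟨p, hp⟩ := spole_walk b
      have hb := mem_ball_iff.mp b.2
      refine ⟨p, ?_⟩
      rw [latF_inr]
      omega
  have distN : ∀ v : GluedV r e, (Dstar r e).dist (npole r e) v = latF r e hm v := by
    intro v
    obtain ⟨p, hp⟩ := walkN v
    refine le_antisymm (le_trans (SimpleGraph.dist_le p) hp) ?_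
    obtain ⟨q, hq⟩ := SimpleGraph.Reachable.exists_walk_length_eq_dist ⟨p⟩
    have h2 := latF_walk (hm := hm) q.reverse
    rw [SimpleGraph.Walk.length_reverse, hq] at h2
    have hFn : latF r e hm (npole r e) = 0 := by
      show hex (0, 0) = 0
      simp [hex]
    omega
  have distS : ∀ v : GluedV r e,
      (Dstar r e).dist (spole r e) v = 2 * r - latF r e hm v := by
    intro v
    obtain ⟨p, hp⟩ := walkS v
    refine le_antisymm (le_trans (SimpleGraph.dist_le p) hp) ?_
    obtain ⟨q, hq⟩ := SimpleGraph.Reachable.exists_walk_length_eq_dist ⟨p⟩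
    have h2 := latF_walk (hm := hm) q
    rw [hq, hFs] at h2
    have := hFb v
    omega
  refine ⟨?_, ?_⟩
  · rw [distN (spole r e), hFs]
  · intro v
    rw [distN v, distS v]
    have := hFb v
    have h0 : latF r e hm v ≤ latF r e hm v := le_refl _
    omega
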